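/- Let A and B be n×n complex matrices. Then for every index j, s_j(AB + BA) ≤ s_j( (AᴴA + BᴴB) ⊕ (AAᴴ + BBᴴ) ), where the right-hand matrix is the 2n×2n block diagonal matrix with diagonal blocks AᴴA + BᴴB and AAᴴ + BBᴴ. -/

import Mathlib

open Matrix
open scoped ComplexOrder

/-- `singularValues X j` is the `(j+1)`-th largest singular value of `X`, i.e. the
decreasingly ordered square roots of the eigenvalues of `Xᴴ * X`. -/
noncomputable def singularValues {m : ℕ} (X : Matrix (Fin m) (Fin m) ℂ) : Fin m → ℝ :=
  fun j => Real.sqrt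
    ((Matrix.isHermitian_conjTranspose_mul_self X).eigenvalues
      (Tuple.sort (Matrix.isHermitian_conjTranspose_mul_self X).eigenvalues j.rev))

/-- `matAbs X = |X|` is the positive semidefinite square root of `Xᴴ * X`. -/
noncomputable def matAbs {m : ℕ} (X : Matrix (Fin m) (Fin m) ℂ) : Matrix (Fin m) (Fin m) ℂ :=
  (Matrix.posSemidef_conjTranspose_mul_self X).1.eigenvectorUnitary.1 *
    Matrix.diagonal ((↑) ∘ (√·) ∘ (Matrix.posSemidef_conjTranspose_mul_self X).1.eigenvalues) *
    (star (Matrix.posSemidef_conjTranspose_mul_self X).1.eigenvectorUnitary : Matrix (Fin m) (Fin m) ℂ)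

/-- `dsum X Y = X ⊕ Y` is the block diagonal matrix with diagonal blocks `X` and `Y`. -/
noncomputable def dsum {m : ℕ} (X Y : Matrix (Fin m) (Fin m) ℂ) :
    Matrix (Fin (m + m)) (Fin (m + m)) ℂ :=
  Matrix.reindex finSumFinEquiv finSumFinEquiv (Matrix.fromBlocks X 0 0 Y)

/-- `matPosPart X = X⁺ = (|X| + X)/2`. -/
noncomputable def matPosPart {m : ℕ} (X : Matrix (Fin m) (Fin m) ℂ) : Matrix (Fin m) (Fin m) ℂ :=
  (2 : ℂ)⁻¹ • (matAbs X + X)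

/-- `matNegPart X = X⁻ = (|X| - X)/2`. -/
noncomputable def matNegPart {m : ℕ} (X : Matrix (Fin m) (Fin m) ℂ) : Matrix (Fin m) (Fin m) ℂ :=
  (2 : ℂ)⁻¹ • (matAbs X - X)

open Matrix Finset
open scoped ComplexOrder ComplexConjugate

noncomputable section

namespace SV17

local notation "⟪" x ", " y "⟫" => inner (𝕜 := ℂ) x y

def bvec {n : ℕ} (a b : Fin n → ℂ) : Fin (n + n) → ℂ :=
  Sum.elim a b ∘ finSumFinEquiv.symm

lemma star_bvec {n : ℕ} (a b : Fin n → ℂ) : star (bvec a b) = bvec (star a) (star b) := by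
  funext t
  simp only [bvec, Pi.star_apply, Function.comp_apply]
  cases finSumFinEquiv.symm t <;> rfl

lemma smul_bvec {n : ℕ} (c : ℂ) (a b : Fin n → ℂ) : c • bvec a b = bvec (c • a) (c • b) := by
  funext t
  simp only [bvec, Pi.smul_apply, Function.comp_apply]
  cases finSumFinEquiv.symm t <;> rfl

lemma dot_bvec {n : ℕ} (a b c d : Fin n → ℂ) :
    dotProduct (bvec a b) (bvec c d) = dotProduct a c + dotProduct b d := by
  unfold bvec dotProduct
  simp only [Function.comp_apply]
  rw [Equiv.sum_comp finSumFinEquiv.symm (fun u => Sum.elim a b u * Sum.elim c d u)]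
  rw [Fintype.sum_sum_type]
  rfl

lemma reindex_mulVec_bvec {n : ℕ} (X Z W Y : Matrix (Fin n) (Fin n) ℂ) (a b : Fin n → ℂ) :
    (Matrix.reindex finSumFinEquiv finSumFinEquiv (Matrix.fromBlocks X Z W Y)) *ᵥ (bvec a b)
      = bvec (X *ᵥ a + Z *ᵥ b) (W *ᵥ a + Y *ᵥ b) := by
  rw [Matrix.reindex_apply, Matrix.submatrix_mulVec_equiv]
  simp only [Equiv.symm_symm]
  have h1 : (bvec a b) ∘ finSumFinEquiv = Sum.elim a b := by
    funext u; simp [bvec]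
  rw [h1, Matrix.fromBlocks_mulVec]
  rfl

lemma quad_eq {m r : ℕ} (G : Matrix (Fin m) (Fin m) ℂ)
    (f : Fin r → EuclideanSpace ℂ (Fin m)) (hf : Orthonormal ℂ f)
    (d : Fin r → ℝ)
    (hGf : ∀ i, G *ᵥ (f i : Fin m → ℂ) = (d i : ℂ) • (f i : Fin m → ℂ))
    (a : Fin r → ℂ) :
    RCLike.re (dotProduct (star ((∑ i, a i • f i : EuclideanSpace ℂ (Fin m)) : Fin m → ℂ))
        (G *ᵥ ((∑ i, a i • f i : EuclideanSpace ℂ (Fin m)) : Fin m → ℂ)))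
        = ∑ i, d i * ‖a i‖^2 ∧
      ‖(∑ i, a i • f i : EuclideanSpace ℂ (Fin m))‖^2 = ∑ i, ‖a i‖^2 := by
  set x : EuclideanSpace ℂ (Fin m) := ∑ i, a i • f i with hx
  have hGx : G *ᵥ (x : Fin m → ℂ) = ((∑ i, (a i * d i) • f i : EuclideanSpace ℂ (Fin m)) : Fin m → ℂ) := by
    show G.mulVecLin x = _
    rw [hx, WithLp.ofLp_sum, WithLp.ofLp_sum, map_sum]
    refine Finset.sum_congr rfl fun i _ => ?_
    show G *ᵥ (a i • (f i : Fin m → ℂ)) = _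
    rw [Matrix.mulVec_smul, hGf i, smul_smul, mul_comm, WithLp.ofLp_smul]
  constructor
  · have h1 : dotProduct (star (x : Fin m → ℂ)) (G *ᵥ (x : Fin m → ℂ))
        = ⟪x, (∑ i, (a i * d i) • f i : EuclideanSpace ℂ (Fin m))⟫ := by
      rw [hGx, EuclideanSpace.inner_eq_star_dotProduct]; exact dotProduct_comm _ _
    rw [h1, hx, hf.inner_sum]
    rw [map_sum]
    refine Finset.sum_congr rfl fun i _ => ?_
    have : (starRingEnd ℂ) (a i) * (a i * (d i : ℂ)) = (d i : ℂ) * ((starRingEnd ℂ) (a i) * a i) := by ring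
    rw [this, Complex.conj_mul']
    rw [← Complex.ofReal_pow, ← Complex.ofReal_mul]
    exact RCLike.ofReal_re _
  · have h2 := hf.inner_sum a a Finset.univ
    have hn : (‖x‖ : ℝ)^2 = RCLike.re (⟪x, x⟫) := norm_sq_eq_re_inner x
    rw [hn]
    conv_lhs => rw [hx]
    rw [h2, map_sum]
    refine Finset.sum_congr rfl fun i _ => ?_
    rw [Complex.conj_mul']
    rw [← Complex.ofReal_pow]
    exact RCLike.ofReal_re _

lemma eig_lower_bound {m : ℕ} {G : Matrix (Fin m) (Fin m) ℂ} (hG : G.IsHermitian)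
    (c : ℝ) (k : Fin m) (f : Fin (k.val+1) → EuclideanSpace ℂ (Fin m)) (hf : Orthonormal ℂ f)
    (hq : ∀ a : Fin (k.val+1) → ℂ,
      c * ‖(∑ i, a i • f i : EuclideanSpace ℂ (Fin m))‖^2 ≤
        RCLike.re (dotProduct
          (star ((∑ i, a i • f i : EuclideanSpace ℂ (Fin m)) : Fin m → ℂ))
          (G *ᵥ ((∑ i, a i • f i : EuclideanSpace ℂ (Fin m)) : Fin m → ℂ)))) :
    c ≤ hG.eigenvalues (Tuple.sort hG.eigenvalues k.rev) := by
  have hkm : (k : ℕ) < m := k.isLt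
  set σ := Tuple.sort hG.eigenvalues with hσ
  set lam := hG.eigenvalues (σ k.rev) with hlam
  set e := hG.eigenvectorBasis with he
  have hmk : m - k.val ≤ m := Nat.sub_le _ _
  set g : Fin (m - k.val) → EuclideanSpace ℂ (Fin m) :=
    fun i => e (σ (Fin.castLE hmk i)) with hg
  have hginj : Function.Injective (fun i : Fin (m - k.val) => σ (Fin.castLE hmk i)) :=
    σ.injective.comp (Fin.castLE_injective hmk)
  have hgon : Orthonormal ℂ g := (e.orthonormal).comp _ hginj
  set S := Submodule.span ℂ (Set.range f) with hS
  set T := Submodule.span ℂ (Set.range g) with hT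
  have hfrS : Module.finrank ℂ S = k.val + 1 := by
    rw [hS, finrank_span_eq_card (hf.linearIndependent)]
    simp
  have hfrT : Module.finrank ℂ T = m - k.val := by
    rw [hT, finrank_span_eq_card (hgon.linearIndependent)]
    simp
  have hne : S ⊓ T ≠ ⊥ := by
    intro hbot
    have := Submodule.finrank_sup_add_finrank_inf_eq S T
    rw [hbot] at this
    simp only [finrank_bot, add_zero] at this
    have hle : Module.finrank ℂ ↥(S ⊔ T) ≤ m := by
      simpa using Submodule.finrank_le (S ⊔ T)
    omega
  obtain ⟨x, hx, hx0⟩ := Submodule.exists_mem_ne_zero_of_ne_bot hne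
  obtain ⟨hxS, hxT⟩ := Submodule.mem_inf.mp hx
  obtain ⟨a, ha⟩ := (Submodule.mem_span_range_iff_exists_fun ℂ).mp hxS
  obtain ⟨b, hb⟩ := (Submodule.mem_span_range_iff_exists_fun ℂ).mp hxT
  set dg : Fin (m - k.val) → ℝ := fun i => hG.eigenvalues (σ (Fin.castLE hmk i)) with hdg
  have hGg : ∀ i, G *ᵥ (g i : Fin m → ℂ) = (dg i : ℂ) • (g i : Fin m → ℂ) := by
    intro i
    funext t
    have ht := congrFun (hG.mulVec_eigenvectorBasis (σ (Fin.castLE hmk i))) t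
    simpa [Complex.real_smul] using ht
  have key := quad_eq G g hgon dg hGg b
  have hdlam : ∀ i, dg i ≤ lam := by
    intro i
    have : (Fin.castLE hmk i) ≤ k.rev := by
      rw [Fin.le_def]
      simp [Fin.rev]
      omega
    exact Tuple.monotone_sort hG.eigenvalues this
  have hQle : RCLike.re (dotProduct (star (x : Fin m → ℂ)) (G *ᵥ (x : Fin m → ℂ)))
      ≤ lam * ‖x‖^2 := by
    rw [← hb, key.1, key.2]
    rw [Finset.mul_sum]
    refine Finset.sum_le_sum fun i _ => ?_
    exact mul_le_mul_of_nonneg_right (hdlam i) (by positivity)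
  have hQge := hq a
  rw [ha] at hQge
  have hx2 : (0:ℝ) < ‖x‖^2 := by
    have := norm_pos_iff.mpr hx0
    positivity
  nlinarith [hQge, hQle, hx2]

end SV17
end

open Matrix Finset SV17
open scoped ComplexOrder ComplexConjugate

noncomputable section

/-- Let `A`, `B` be `n×n` complex matrices. Then for every index `j`,
`s_j(AB + BA) ≤ s_j((AᴴA + BᴴB) ⊕ (AAᴴ + BBᴴ))`. -/
theorem stmt_17 {n : ℕ} (A B : Matrix (Fin n) (Fin n) ℂ) (j : Fin n) :
    singularValues (A * B + B * A) j ≤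
      singularValues (dsum (Aᴴ * A + Bᴴ * B) (A * Aᴴ + B * Bᴴ)) (Fin.castAdd n j) := by
  classical
  set K : Matrix (Fin n) (Fin n) ℂ := A * B + B * A with hKdef
  set P : Matrix (Fin n) (Fin n) ℂ := Aᴴ * A + Bᴴ * B with hPdef
  set Q : Matrix (Fin n) (Fin n) ℂ := A * Aᴴ + B * Bᴴ with hQdef
  set M : Matrix (Fin (n+n)) (Fin (n+n)) ℂ := dsum P Q with hMdef
  have hKK := Matrix.isHermitian_conjTranspose_mul_self K
  have hMM := Matrix.isHermitian_conjTranspose_mul_self M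
  set τ := Tuple.sort hKK.eigenvalues with hτ
  set μj : ℝ := hKK.eigenvalues (τ (Fin.rev j)) with hμj
  set ν : ℝ := hMM.eigenvalues (Tuple.sort hMM.eigenvalues (Fin.rev (Fin.castAdd n j))) with hν
  have hgoal : singularValues K j = Real.sqrt μj := rfl
  have hgoal2 : singularValues M (Fin.castAdd n j) = Real.sqrt ν := rfl
  rw [hgoal, hgoal2]
  apply Real.sqrt_le_sqrt
  -- now μj ≤ ν
  by_cases hpos : 0 < μj
  case neg =>
    have h1 : 0 ≤ μj := (Matrix.posSemidef_conjTranspose_mul_self K).eigenvalues_nonneg _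
    have h2 : 0 ≤ ν := (Matrix.posSemidef_conjTranspose_mul_self M).eigenvalues_nonneg _
    linarith [le_of_not_gt hpos]
  case pos =>
  set s : ℝ := Real.sqrt μj with hs
  have hspos : 0 < s := Real.sqrt_pos.mpr hpos
  have hj1n : j.val + 1 ≤ n := j.isLt
  set q : Fin (j.val+1) → Fin n := fun i => (Fin.castLE hj1n i).rev with hq
  have hqge : ∀ i, j.rev ≤ q i := by
    intro i
    rw [Fin.le_def]
    simp [hq, Fin.rev]
    omega
  have hqinj : Function.Injective q := fun i l h => by
    apply Fin.castLE_injective hj1n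
    exact Fin.rev_injective h
  set μ' : Fin (j.val+1) → ℝ := fun i => hKK.eigenvalues (τ (q i)) with hμ'
  have hμ'ge : ∀ i, μj ≤ μ' i := fun i => Tuple.monotone_sort hKK.eigenvalues (hqge i)
  have hμ'pos : ∀ i, 0 < μ' i := fun i => lt_of_lt_of_le hpos (hμ'ge i)
  set s' : Fin (j.val+1) → ℝ := fun i => Real.sqrt (μ' i) with hs'
  have hs'pos : ∀ i, 0 < s' i := fun i => Real.sqrt_pos.mpr (hμ'pos i)
  have hs'sq : ∀ i, (s' i)^2 = μ' i := fun i => Real.sq_sqrt (hμ'pos i).le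
  have hsle : ∀ i, s ≤ s' i := fun i => Real.sqrt_le_sqrt (hμ'ge i)
  set v : Fin (j.val+1) → EuclideanSpace ℂ (Fin n) :=
    fun i => hKK.eigenvectorBasis (τ (q i)) with hv
  have hvon : Orthonormal ℂ v :=
    (hKK.eigenvectorBasis.orthonormal).comp _ (τ.injective.comp hqinj)
  have hKKv : ∀ i, (Kᴴ * K) *ᵥ (v i : Fin n → ℂ) = (μ' i : ℂ) • (v i : Fin n → ℂ) := by
    intro i
    funext t
    have ht := congrFun (hKK.mulVec_eigenvectorBasis (τ (q i))) t
    simpa [Complex.real_smul] using ht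
  set w : Fin (j.val+1) → EuclideanSpace ℂ (Fin n) :=
    fun i => WithLp.toLp 2 (((s' i : ℂ))⁻¹ • (K *ᵥ (v i : Fin n → ℂ)) : Fin n → ℂ) with hw
  have hs'ne : ∀ i, (s' i : ℂ) ≠ 0 := fun i => by
    exact_mod_cast Complex.ofReal_ne_zero.mpr (hs'pos i).ne'
  have hKv : ∀ i, K *ᵥ (v i : Fin n → ℂ) = (s' i : ℂ) • (w i : Fin n → ℂ) := by
    intro i
    show K *ᵥ (v i : Fin n → ℂ) = (s' i : ℂ) • ((s' i : ℂ)⁻¹ • (K *ᵥ (v i : Fin n → ℂ)))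
    rw [smul_smul, mul_inv_cancel₀ (hs'ne i), one_smul]
  have hKHw : ∀ i, Kᴴ *ᵥ (w i : Fin n → ℂ) = (s' i : ℂ) • (v i : Fin n → ℂ) := by
    intro i
    show Kᴴ *ᵥ ((s' i : ℂ)⁻¹ • (K *ᵥ (v i : Fin n → ℂ))) = _
    rw [Matrix.mulVec_smul, Matrix.mulVec_mulVec, hKKv i, smul_smul]
    have : ((s' i : ℂ))⁻¹ * (μ' i : ℂ) = (s' i : ℂ) := by
      rw [← hs'sq i]
      push_cast
      rw [sq, ← mul_assoc, inv_mul_cancel₀ (hs'ne i), one_mul]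
    rw [this]
  have hdotvv : ∀ i l, dotProduct (star (v i : Fin n → ℂ)) (v l : Fin n → ℂ)
      = if i = l then (1:ℂ) else 0 := by
    intro i l
    rw [dotProduct_comm]; exact orthonormal_iff_ite.mp hvon i l
  have hdotww : ∀ i l, dotProduct (star (w i : Fin n → ℂ)) (w l : Fin n → ℂ)
      = if i = l then (1:ℂ) else 0 := by
    intro i l
    show dotProduct (star ((s' i : ℂ)⁻¹ • (K *ᵥ (v i : Fin n → ℂ))))
        ((s' l : ℂ)⁻¹ • (K *ᵥ (v l : Fin n → ℂ))) = _
    rw [star_smul, smul_dotProduct, dotProduct_smul]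
    have hmid : dotProduct (star (K *ᵥ (v i : Fin n → ℂ))) (K *ᵥ (v l : Fin n → ℂ))
        = (μ' l : ℂ) * (if i = l then (1:ℂ) else 0) := by
      rw [Matrix.star_mulVec, ← dotProduct_mulVec, Matrix.mulVec_mulVec, hKKv l,
        dotProduct_smul, hdotvv i l]
      rfl
    rw [hmid]
    simp only [star_inv₀, RCLike.star_def, Complex.conj_ofReal, smul_eq_mul]
    rcases eq_or_ne i l with rfl | hne
    · simp only [if_pos rfl, mul_one]
      rw [← hs'sq i]
      push_cast
      field_simp [hs'ne i]
    · simp [hne]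
  
  -- block vectors z i
  set c2 : ℂ := ((Real.sqrt 2 : ℝ) : ℂ)⁻¹ with hc2
  have hc2conj : (starRingEnd ℂ) c2 = c2 := by
    rw [hc2, map_inv₀, Complex.conj_ofReal]
  have hc2sq : c2 * c2 = (2:ℂ)⁻¹ := by
    rw [hc2, ← mul_inv, ← Complex.ofReal_mul, Real.mul_self_sqrt (by norm_num)]
    norm_num
  set z : Fin (j.val+1) → EuclideanSpace ℂ (Fin (n+n)) :=
    fun i => WithLp.toLp 2 (c2 • bvec (v i : Fin n → ℂ) (w i : Fin n → ℂ) : Fin (n+n) → ℂ) with hz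
  have hdotzz : ∀ i l, dotProduct (star (z i : Fin (n+n) → ℂ)) (z l : Fin (n+n) → ℂ)
      = if i = l then (1:ℂ) else 0 := by
    intro i l
    show dotProduct (star (c2 • bvec (v i : Fin n → ℂ) (w i : Fin n → ℂ)))
      (c2 • bvec (v l : Fin n → ℂ) (w l : Fin n → ℂ)) = _
    rw [star_smul, smul_dotProduct, dotProduct_smul, star_bvec, dot_bvec,
      hdotvv i l, hdotww i l]
    rw [smul_eq_mul, smul_eq_mul, RCLike.star_def, hc2conj]
    rcases eq_or_ne i l with rfl | hne
    · simp only [if_pos rfl]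
      rw [← mul_assoc, hc2sq]
      norm_num
    · simp [hne]
  have hzon : Orthonormal ℂ z := orthonormal_iff_ite.mpr fun i l => by
    rw [EuclideanSpace.inner_eq_star_dotProduct, dotProduct_comm]; exact hdotzz i l
  set H : Matrix (Fin (n+n)) (Fin (n+n)) ℂ :=
    Matrix.reindex finSumFinEquiv finSumFinEquiv (Matrix.fromBlocks 0 Kᴴ K 0) with hH
  have hHz : ∀ i, H *ᵥ (z i : Fin (n+n) → ℂ) = ((s' i : ℝ) : ℂ) • (z i : Fin (n+n) → ℂ) := by
    intro i
    show H *ᵥ (c2 • bvec (v i : Fin n → ℂ) (w i : Fin n → ℂ))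
      = (s' i : ℂ) • (c2 • bvec (v i : Fin n → ℂ) (w i : Fin n → ℂ))
    rw [Matrix.mulVec_smul, hH, reindex_mulVec_bvec]
    rw [Matrix.zero_mulVec, Matrix.zero_mulVec, zero_add, add_zero, hKHw i, hKv i]
    rw [← smul_bvec, smul_comm]
  -- M - H is positive semidefinite
  set Cb : Matrix (Fin (n+n)) (Fin (n+n)) ℂ :=
    Matrix.reindex finSumFinEquiv finSumFinEquiv (Matrix.fromBlocks A (-Bᴴ) B (-Aᴴ)) with hCb
  have hMH : M - H = Cbᴴ * Cb := by
    rw [hMdef, hH, hCb]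
    unfold dsum
    rw [Matrix.reindex_apply, Matrix.reindex_apply, Matrix.reindex_apply]
    have hsub : ∀ (X Y : Matrix (Fin n ⊕ Fin n) (Fin n ⊕ Fin n) ℂ),
        X.submatrix ⇑finSumFinEquiv.symm ⇑finSumFinEquiv.symm
          - Y.submatrix ⇑finSumFinEquiv.symm ⇑finSumFinEquiv.symm
          = (X - Y).submatrix ⇑finSumFinEquiv.symm ⇑finSumFinEquiv.symm := by
      intro X Y
      ext t u
      simp [Matrix.sub_apply]
    rw [hsub, Matrix.conjTranspose_submatrix, Matrix.submatrix_mul_equiv]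
    congr 1
    have h11 : Aᴴ * A + Bᴴ * B = P := rfl
    have h12 : Aᴴ * (-Bᴴ) + Bᴴ * (-Aᴴ) = -Kᴴ := by
      rw [hKdef]
      simp only [Matrix.conjTranspose_add, Matrix.conjTranspose_mul, Matrix.mul_neg]
      abel
    have h21 : (-B) * A + (-A) * B = -K := by
      rw [hKdef]
      simp only [Matrix.neg_mul]
      abel
    have h22 : (-B) * (-Bᴴ) + (-A) * (-Aᴴ) = Q := by
      rw [hQdef]
      simp only [Matrix.neg_mul, Matrix.mul_neg, neg_neg]
      abel
    simp only [Matrix.fromBlocks_conjTranspose, Matrix.conjTranspose_neg,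
      Matrix.conjTranspose_conjTranspose, Matrix.fromBlocks_multiply]
    rw [h11, h12, h21, h22]
    rw [sub_eq_add_neg, Matrix.fromBlocks_neg, Matrix.fromBlocks_add]
    simp
  have hpsd : (M - H).PosSemidef := by
    rw [hMH]
    exact Matrix.posSemidef_conjTranspose_mul_self Cb
  -- the variational hypothesis
  have hq : ∀ a : Fin (j.val+1) → ℂ,
      μj * ‖(∑ i, a i • z i : EuclideanSpace ℂ (Fin (n+n)))‖^2 ≤
        RCLike.re (dotProduct
          (star ((∑ i, a i • z i : EuclideanSpace ℂ (Fin (n+n))) : Fin (n+n) → ℂ))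
          ((Mᴴ * M) *ᵥ ((∑ i, a i • z i : EuclideanSpace ℂ (Fin (n+n))) : Fin (n+n) → ℂ))) := by
    intro a
    obtain ⟨hH1, hH2⟩ := quad_eq H z hzon s' hHz a
    set x : EuclideanSpace ℂ (Fin (n+n)) := ∑ i, a i • z i with hx
    set Mx : EuclideanSpace ℂ (Fin (n+n)) := WithLp.toLp 2 (M *ᵥ (x : Fin (n+n) → ℂ) : Fin (n+n) → ℂ) with hMx
    have step4 : RCLike.re (dotProduct (star (x : Fin (n+n) → ℂ))
        ((Mᴴ * M) *ᵥ (x : Fin (n+n) → ℂ))) = ‖Mx‖^2 := by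
      rw [← Matrix.mulVec_mulVec, dotProduct_mulVec, ← Matrix.star_mulVec]
      rw [dotProduct_comm]; exact (norm_sq_eq_re_inner (𝕜 := ℂ) Mx).symm
    rw [step4]
    have step1 : s * ‖x‖^2 ≤ RCLike.re (dotProduct (star (x : Fin (n+n) → ℂ))
        (H *ᵥ (x : Fin (n+n) → ℂ))) := by
      rw [hH1, hH2, Finset.mul_sum]
      exact Finset.sum_le_sum fun i _ => mul_le_mul_of_nonneg_right (hsle i) (by positivity)
    have step2 : RCLike.re (dotProduct (star (x : Fin (n+n) → ℂ))
        (H *ᵥ (x : Fin (n+n) → ℂ))) ≤ RCLike.re (dotProduct (star (x : Fin (n+n) → ℂ))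
        (M *ᵥ (x : Fin (n+n) → ℂ))) := by
      have h0 := hpsd.re_dotProduct_nonneg (x : Fin (n+n) → ℂ)
      rw [Matrix.sub_mulVec, dotProduct_sub, map_sub] at h0
      linarith
    have step3 : RCLike.re (dotProduct (star (x : Fin (n+n) → ℂ))
        (M *ᵥ (x : Fin (n+n) → ℂ))) ≤ ‖x‖ * ‖Mx‖ := by
      calc RCLike.re (dotProduct (star (x : Fin (n+n) → ℂ)) (M *ᵥ (x : Fin (n+n) → ℂ)))
          = RCLike.re (inner (𝕜 := ℂ) x Mx) := by
              rw [EuclideanSpace.inner_eq_star_dotProduct]; exact congrArg _ (dotProduct_comm _ _)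
        _ ≤ ‖(inner (𝕜 := ℂ) x Mx : ℂ)‖ := RCLike.re_le_norm _
        _ ≤ ‖x‖ * ‖Mx‖ := norm_inner_le_norm x Mx
    have hmux : s * ‖x‖^2 ≤ ‖x‖ * ‖Mx‖ := le_trans step1 (le_trans step2 step3)
    have hμs : μj = s^2 := (Real.sq_sqrt hpos.le).symm
    rcases eq_or_lt_of_le (norm_nonneg x) with h0 | h0
    · rw [← h0]
      simp only [ne_eq, OfNat.ofNat_ne_zero, not_false_eq_true, zero_pow, mul_zero]
      positivity
    · have h1 : s * ‖x‖ ≤ ‖Mx‖ := by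
        have h2 : (s * ‖x‖) * ‖x‖ ≤ ‖Mx‖ * ‖x‖ := by nlinarith [hmux]
        exact le_of_mul_le_mul_right h2 h0
      have h3 : (s * ‖x‖)^2 ≤ ‖Mx‖^2 := by
        have hnn : 0 ≤ s * ‖x‖ := by positivity
        exact pow_le_pow_left₀ hnn h1 2
      calc μj * ‖x‖^2 = (s*‖x‖)^2 := by rw [hμs]; ring
        _ ≤ ‖Mx‖^2 := h3
  exact eig_lower_bound hMM μj (Fin.castAdd n j) z hzon hq
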